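/- Suppose (u_k, y_k), k = 0,…,N−1, is a trajectory of a minimal realization (A,B,C,D) of order n, u is persistently exciting of order L+n, and n ≤ ν < L. Fix γ² ∈ ℝ. Then the following are equivalent: (a) for every α ∈ ℝ^{N−L+1} with a zero data-prefix of length ν, γ² Σ_{i=0}^{L−1} |Σ_{j=0}^{N−L} α_j u_{i+j}|² ≥ Σ_{i=0}^{L−1} |Σ_{j=0}^{N−L} α_j y_{i+j}|²; (b) for every trajectory (u_k, y_k), k = 0,…,L−ν−1, of (A,B,C,D) with initial state x_0 = 0 and every h = 0,…,L−ν−1, γ² Σ_{k=0}^{h} |u_k|² ≥ Σ_{k=0}^{h} |y_k|². In other words, the finite-horizon ℓ₂-gain bound γ of the unknown system over horizon L−ν can be verified from one persistently exciting data trajectory. -/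

import Mathlib

open Matrix Finset

/-- `(u, y)` is a trajectory of `(A, B, C, D)` over the horizon `N`. -/
def IsTrajectory {n m p : ℕ} (A : Matrix (Fin n) (Fin n) ℝ) (B : Matrix (Fin n) (Fin m) ℝ)
    (C : Matrix (Fin p) (Fin n) ℝ) (D : Matrix (Fin p) (Fin m) ℝ)
    (N : ℕ) (u : ℕ → Fin m → ℝ) (y : ℕ → Fin p → ℝ) : Prop :=
  ∃ x : ℕ → Fin n → ℝ, ∀ k < N,
    x (k + 1) = A.mulVec (x k) + B.mulVec (u k) ∧
    y k = C.mulVec (x k) + D.mulVec (u k)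

/-- `(u, y)` is a trajectory of `(A, B, C, D)` over the horizon `N` starting from `x₀ = 0`. -/
def IsZeroInitTrajectory {n m p : ℕ} (A : Matrix (Fin n) (Fin n) ℝ) (B : Matrix (Fin n) (Fin m) ℝ)
    (C : Matrix (Fin p) (Fin n) ℝ) (D : Matrix (Fin p) (Fin m) ℝ)
    (N : ℕ) (u : ℕ → Fin m → ℝ) (y : ℕ → Fin p → ℝ) : Prop :=
  ∃ x : ℕ → Fin n → ℝ, x 0 = 0 ∧ ∀ k < N,
    x (k + 1) = A.mulVec (x k) + B.mulVec (u k) ∧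
    y k = C.mulVec (x k) + D.mulVec (u k)

/-- The observability matrix `col(C, CA, …, CA^{n-1})`. -/
def obsMat {n p : ℕ} (A : Matrix (Fin n) (Fin n) ℝ) (C : Matrix (Fin p) (Fin n) ℝ) :
    Matrix (Fin n × Fin p) (Fin n) ℝ :=
  fun ip j => (C * A ^ (ip.1 : ℕ)) ip.2 j

/-- The controllability matrix `(B, AB, …, A^{n-1}B)`. -/
def ctrbMat {n m : ℕ} (A : Matrix (Fin n) (Fin n) ℝ) (B : Matrix (Fin n) (Fin m) ℝ) :
    Matrix (Fin n) (Fin n × Fin m) ℝ :=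
  fun i jm => (A ^ (jm.1 : ℕ) * B) i jm.2

/-- Minimality of a realization. -/
def IsMinimal {n m p : ℕ} (A : Matrix (Fin n) (Fin n) ℝ) (B : Matrix (Fin n) (Fin m) ℝ)
    (C : Matrix (Fin p) (Fin n) ℝ) : Prop :=
  (obsMat A C).rank = n ∧ (ctrbMat A B).rank = n

/-- The Hankel matrix of depth `L` of a signal of length `N`. -/
def hankelMat (q L N : ℕ) (u : ℕ → Fin q → ℝ) :
    Matrix (Fin L × Fin q) (Fin (N - L + 1)) ℝ :=
  fun is j => u ((is.1 : ℕ) + (j : ℕ)) is.2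

/-- Persistency of excitation of order `L` of a signal of length `N`. -/
def PersistentlyExciting (m L N : ℕ) (u : ℕ → Fin m → ℝ) : Prop :=
  (hankelMat m L N u).rank = m * L

/-- The linear combination `Σ_j α_j u_{i+j}` of time shifts of a signal. -/
def combSignal {q : ℕ} (N L : ℕ) (α : Fin (N - L + 1) → ℝ) (u : ℕ → Fin q → ℝ) (i : ℕ) :
    Fin q → ℝ :=
  fun s => ∑ j : Fin (N - L + 1), α j * u (i + (j : ℕ)) s

/-- `α` has a zero data-prefix of length `ν` with respect to the data `(u, y)`. -/
def ZeroDataPrefix {m p : ℕ} (N L ν : ℕ) (α : Fin (N - L + 1) → ℝ)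
    (u : ℕ → Fin m → ℝ) (y : ℕ → Fin p → ℝ) : Prop :=
  ∀ i < ν, combSignal N L α u i = 0 ∧ combSignal N L α y i = 0

lemma mulVec_eq_zero_of_rank_cols {ρ κ : Type*} [Fintype ρ] [Fintype κ] [DecidableEq κ]
    (M : Matrix ρ κ ℝ) (h : M.rank = Fintype.card κ) {v : κ → ℝ} (hv : M.mulVec v = 0) :
    v = 0 := by
  have hker : LinearMap.ker M.mulVecLin = ⊥ := by
    have h1 := LinearMap.finrank_range_add_finrank_ker M.mulVecLin
    rw [show Module.finrank ℝ (LinearMap.range M.mulVecLin) = M.rank from rfl, h] at h1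
    simp only [Module.finrank_pi, Fintype.card] at h1
    have : Module.finrank ℝ (LinearMap.ker M.mulVecLin) = 0 := by
      have := Module.finrank_pi (R := ℝ) (ι := κ)
      omega
    exact Submodule.finrank_eq_zero.mp this
  have : v ∈ LinearMap.ker M.mulVecLin := by simpa [Matrix.mulVecLin_apply] using hv
  rw [hker] at this; simpa using this

lemma vecMul_eq_zero_of_rank_rows {ρ κ : Type*} [Fintype ρ] [Fintype κ] [DecidableEq ρ]
    (M : Matrix ρ κ ℝ) (h : M.rank = Fintype.card ρ) {φ : ρ → ℝ} (hφ : M.vecMul φ = 0) :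
    φ = 0 := by
  refine mulVec_eq_zero_of_rank_cols Mᵀ ?_ ?_
  · rwa [Matrix.rank_transpose]
  · rwa [Matrix.mulVec_transpose]

lemma mulVec_surjective_of_rows_li {ρ κ : Type*} [Fintype ρ] [Fintype κ] [DecidableEq κ] [DecidableEq ρ]
    (S : Matrix ρ κ ℝ) (h : ∀ φ : ρ → ℝ, S.vecMul φ = 0 → φ = 0) :
    Function.Surjective S.mulVec := by
  have hinj : Function.Injective Sᵀ.mulVecLin := by
    rw [← LinearMap.ker_eq_bot, LinearMap.ker_eq_bot']
    intro φ hφ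
    exact h φ (by rwa [← Matrix.mulVec_transpose, ← Matrix.mulVecLin_apply])
  have hrank : S.rank = Fintype.card ρ := by
    rw [← Matrix.rank_transpose]
    have h1 := LinearMap.finrank_range_add_finrank_ker Sᵀ.mulVecLin
    rw [LinearMap.ker_eq_bot.mpr hinj] at h1
    simp only [finrank_bot, add_zero, Module.finrank_pi] at h1
    exact h1
  have htop : LinearMap.range S.mulVecLin = ⊤ := by
    apply Submodule.eq_top_of_finrank_eq
    rw [show Module.finrank ℝ (LinearMap.range S.mulVecLin) = S.rank from rfl, hrank,
      Module.finrank_pi]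
  intro w
  obtain ⟨α, hα⟩ := (LinearMap.range_eq_top.mp htop) w
  exact ⟨α, by simpa [Matrix.mulVecLin_apply] using hα⟩

lemma cayley {n : ℕ} (A : Matrix (Fin n) (Fin n) ℝ) :
    A ^ n = ∑ i ∈ range n, (-(A.charpoly.coeff i)) • A ^ i := by
  have h := Matrix.aeval_self_charpoly A
  have hdeg : A.charpoly.natDegree = n := by simpa using A.charpoly_natDegree_eq_dim
  rw [Polynomial.aeval_eq_sum_range, hdeg, Finset.sum_range_succ] at h
  have hc : A.charpoly.coeff n = 1 := by
    have := A.charpoly_monic.leadingCoeff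
    rwa [Polynomial.leadingCoeff, hdeg] at this
  rw [hc, one_smul] at h
  have h2 : A ^ n = -∑ i ∈ range n, A.charpoly.coeff i • A ^ i := by
    rw [eq_neg_iff_add_eq_zero, add_comm]; exact h
  rw [h2, ← Finset.sum_neg_distrib]
  exact Finset.sum_congr rfl fun i _ => (neg_smul _ _).symm


lemma sum_dotProduct' {ι : Type*} {q : ℕ} (s : Finset ι) (f : ι → Fin q → ℝ) (v : Fin q → ℝ) :
    (∑ i ∈ s, f i) ⬝ᵥ v = ∑ i ∈ s, f i ⬝ᵥ v := by
  simp only [dotProduct, Finset.sum_apply, Finset.sum_mul]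
  exact Finset.sum_comm

lemma vecMul_matrix_sum {ι : Type*} {q r : ℕ} (s : Finset ι) (η : Fin q → ℝ)
    (M : ι → Matrix (Fin q) (Fin r) ℝ) :
    η ᵥ* (∑ i ∈ s, M i) = ∑ i ∈ s, η ᵥ* M i := by
  funext a
  simp only [Matrix.vecMul, dotProduct, Finset.sum_apply, Matrix.sum_apply,
    Finset.mul_sum]
  exact Finset.sum_comm

lemma vecMul_matrix_smul {q r : ℕ} (c : ℝ) (η : Fin q → ℝ) (M : Matrix (Fin q) (Fin r) ℝ) :
    η ᵥ* (c • M) = c • (η ᵥ* M) := by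
  funext a
  simp only [Matrix.vecMul, dotProduct, Matrix.smul_apply, Pi.smul_apply,
    smul_eq_mul, Finset.mul_sum]
  exact Finset.sum_congr rfl fun i _ => by ring

lemma key_surj {n m N L : ℕ} (A : Matrix (Fin n) (Fin n) ℝ) (B : Matrix (Fin n) (Fin m) ℝ)
    (u : ℕ → Fin m → ℝ) (x : ℕ → Fin n → ℝ)
    (hx : ∀ k < N, x (k + 1) = A.mulVec (x k) + B.mulVec (u k))
    (hctrb : (ctrbMat A B).rank = n)
    (hpe : PersistentlyExciting m (L + n) N u)
    (hL : 0 < L) (hLN : L + n ≤ N)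
    (v : Fin n → ℝ) (w : ℕ → Fin m → ℝ) :
    ∃ α : Fin (N - L + 1) → ℝ,
      (∀ i < L, combSignal N L α u i = w i) ∧
      (∀ r, ∑ j : Fin (N - L + 1), α j * x (j : ℕ) r = v r) := by
  classical
  set S : Matrix (Fin n ⊕ Fin L × Fin m) (Fin (N - L + 1)) ℝ :=
    Sum.elim (fun r j => x (j : ℕ) r) (fun is j => u ((is.1 : ℕ) + (j : ℕ)) is.2) with hS
  have rowsli : ∀ φ : Fin n ⊕ Fin L × Fin m → ℝ, S.vecMul φ = 0 → φ = 0 := by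
    intro φ hφ
    set η : Fin n → ℝ := fun r => φ (Sum.inl r) with hη
    set ζ : ℕ → Fin m → ℝ := fun i a => if h : i < L then φ (Sum.inr (⟨i, h⟩, a)) else 0 with hζdef
    have hζ0 : ∀ s, L ≤ s → ζ s = 0 := by
      intro s hs
      funext a
      simp only [hζdef]
      rw [dif_neg (by omega)]
      rfl
    -- base identity from hφ
    have H : ∀ j ≤ N - L, η ⬝ᵥ x j + ∑ i ∈ range L, ζ i ⬝ᵥ u (j + i) = 0 := by
      intro j hj
      have h0 := congrFun hφ ⟨j, by omega⟩
      simp only [Matrix.vecMul, Pi.zero_apply, dotProduct, Fintype.sum_sum_type] at h0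
      rw [show ∑ r : Fin n, φ (Sum.inl r) * S (Sum.inl r) ⟨j, by omega⟩ = η ⬝ᵥ x j by
        simp [hS, dotProduct, hη]] at h0
      rw [Fintype.sum_prod_type] at h0
      rw [show ∑ i : Fin L, ∑ a : Fin m, φ (Sum.inr (i, a)) * S (Sum.inr (i, a)) ⟨j, by omega⟩
          = ∑ i ∈ range L, ζ i ⬝ᵥ u (j + i) by
        rw [← Fin.sum_univ_eq_sum_range]
        refine Finset.sum_congr rfl fun i _ => ?_
        simp [hS, dotProduct, hζdef, i.isLt, add_comm (i : ℕ) j]] at h0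
      exact h0
    -- the shifted functionals
    set θ : ℕ → ℕ → Fin m → ℝ :=
      fun i s => if s < i then (η ᵥ* (A ^ (i - 1 - s) * B)) else ζ (s - i) with hθdef
    have θshift : ∀ i s, θ (i + 1) (s + 1) = θ i s := by
      intro i s
      simp only [hθdef]
      by_cases h : s < i
      · rw [if_pos (by omega), if_pos h, show i + 1 - 1 - (s + 1) = i - 1 - s by omega]
      · rw [if_neg (by omega), if_neg h, show s + 1 - (i + 1) = s - i by omega]
    have hθ0 : ∀ s, θ 0 s = ζ s := by
      intro s
      simp only [hθdef]
      rw [if_neg (by omega), Nat.sub_zero]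
    have C2 : ∀ i ≤ n, ∀ j, i + j ≤ N - L →
        (η ᵥ* A ^ i) ⬝ᵥ x j + ∑ s ∈ range (L + n), θ i s ⬝ᵥ u (j + s) = 0 := by
      intro i
      induction i with
      | zero =>
        intro _ j hj
        rw [pow_zero, Matrix.vecMul_one]
        have hz : ∀ s ∈ Finset.Ico L (L + n), θ 0 s ⬝ᵥ u (j + s) = 0 := by
          intro s hs
          rw [Finset.mem_Ico] at hs
          rw [hθ0, hζ0 s hs.1, zero_dotProduct]
        rw [← Finset.sum_range_add_sum_Ico _ (by omega : L ≤ L + n), Finset.sum_eq_zero hz,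
          add_zero]
        rw [show ∑ s ∈ range L, θ 0 s ⬝ᵥ u (j + s) = ∑ s ∈ range L, ζ s ⬝ᵥ u (j + s) from
          Finset.sum_congr rfl fun s _ => by rw [hθ0]]
        exact H j (by omega)
      | succ i ih =>
        intro hi j hj
        have IH := ih (by omega) (j + 1) (by omega)
        have hxj : x (j + 1) = A.mulVec (x j) + B.mulVec (u j) := hx j (by omega)
        have hhead : θ (i + 1) 0 ⬝ᵥ u (j + 0) = (η ᵥ* (A ^ i * B)) ⬝ᵥ u j := by
          simp only [hθdef]
          rw [if_pos (by omega : (0:ℕ) < i + 1), show i + 1 - 1 - 0 = i by omega, add_zero]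
        have htop : θ i (L + n - 1) = 0 := by
          simp only [hθdef]
          rw [if_neg (by omega)]
          exact hζ0 _ (by omega)
        have hsum : ∑ s ∈ range (L + n), θ (i + 1) s ⬝ᵥ u (j + s)
            = (η ᵥ* (A ^ i * B)) ⬝ᵥ u j
              + ∑ s ∈ range (L + n), θ i s ⬝ᵥ u ((j + 1) + s) := by
          have hLn : L + n = (L + n - 1) + 1 := by omega
          rw [hLn, Finset.sum_range_succ']
          rw [show ∑ k ∈ range (L + n - 1), θ (i + 1) (k + 1) ⬝ᵥ u (j + (k + 1))
              = ∑ k ∈ range (L + n - 1), θ i k ⬝ᵥ u ((j + 1) + k) from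
            Finset.sum_congr rfl fun k _ => by
              rw [θshift, show j + (k + 1) = (j + 1) + k by omega]]
          rw [hhead, Finset.sum_range_succ, htop, zero_dotProduct, add_zero, add_comm]
        have hhead2 : (η ᵥ* A ^ (i + 1)) ⬝ᵥ x j
            = (η ᵥ* A ^ i) ⬝ᵥ x (j + 1) - (η ᵥ* (A ^ i * B)) ⬝ᵥ u j := by
          rw [hxj, dotProduct_add, Matrix.dotProduct_mulVec, Matrix.dotProduct_mulVec,
            Matrix.vecMul_vecMul, Matrix.vecMul_vecMul, pow_succ]
          ring
        rw [hsum, hhead2,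
          show (η ᵥ* A ^ i) ⬝ᵥ x (j + 1) - (η ᵥ* (A ^ i * B)) ⬝ᵥ u j
            + ((η ᵥ* (A ^ i * B)) ⬝ᵥ u j + ∑ s ∈ range (L + n), θ i s ⬝ᵥ u ((j + 1) + s))
            = (η ᵥ* A ^ i) ⬝ᵥ x (j + 1) + ∑ s ∈ range (L + n), θ i s ⬝ᵥ u ((j + 1) + s) by ring]
        exact IH
    -- Cayley–Hamilton combination of the functionals is killed by persistency of excitation
    set c : ℕ → ℝ := fun i => -(A.charpoly.coeff i) with hcdef
    have hCH : A ^ n = ∑ i ∈ range n, c i • A ^ i := cayley A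
    set ψ : Fin (L + n) × Fin m → ℝ :=
      fun sa => θ n (sa.1 : ℕ) sa.2 - ∑ i ∈ range n, c i * θ i (sa.1 : ℕ) sa.2 with hψdef
    have hCHdot : ∀ j, (η ᵥ* A ^ n) ⬝ᵥ x j = ∑ i ∈ range n, c i * ((η ᵥ* A ^ i) ⬝ᵥ x j) := by
      intro j
      rw [hCH, vecMul_matrix_sum, sum_dotProduct']
      exact Finset.sum_congr rfl fun i _ => by
        rw [vecMul_matrix_smul, smul_dotProduct, smul_eq_mul]
    have hψ0 : ψ = 0 := by
      refine vecMul_eq_zero_of_rank_rows (hankelMat m (L + n) N u) ?_ ?_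
      · rw [hpe, Fintype.card_prod, Fintype.card_fin, Fintype.card_fin, mul_comm]
      · funext j'
        have hj : (j' : ℕ) ≤ N - (L + n) := by omega
        have hC2 : ∀ i ≤ n, ∑ s ∈ range (L + n), θ i s ⬝ᵥ u (s + (j' : ℕ))
            = -((η ᵥ* A ^ i) ⬝ᵥ x (j' : ℕ)) := by
          intro i hi
          have h := C2 i hi (j' : ℕ) (by omega)
          rw [show ∑ s ∈ range (L + n), θ i s ⬝ᵥ u (s + (j' : ℕ))
              = ∑ s ∈ range (L + n), θ i s ⬝ᵥ u ((j' : ℕ) + s) from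
            Finset.sum_congr rfl fun s _ => by rw [add_comm]]
          linarith
        simp only [Pi.zero_apply]
        calc (hankelMat m (L + n) N u).vecMul ψ j'
            = ∑ s : Fin (L + n), ∑ a : Fin m, ψ (s, a) * u ((s : ℕ) + (j' : ℕ)) a := by
              simp only [Matrix.vecMul, dotProduct, hankelMat, Fintype.sum_prod_type]
          _ = ∑ s : Fin (L + n), (θ n (s : ℕ) ⬝ᵥ u ((s : ℕ) + (j' : ℕ))
                - ∑ i ∈ range n, c i * (θ i (s : ℕ) ⬝ᵥ u ((s : ℕ) + (j' : ℕ)))) := by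
              refine Finset.sum_congr rfl fun s _ => ?_
              simp only [hψdef, dotProduct, sub_mul, Finset.sum_sub_distrib,
                Finset.sum_mul, Finset.mul_sum]
              congr 1
              rw [Finset.sum_comm]
              exact Finset.sum_congr rfl fun a _ => Finset.sum_congr rfl fun i _ => by ring
          _ = ∑ s ∈ range (L + n), (θ n s ⬝ᵥ u (s + (j' : ℕ))
                - ∑ i ∈ range n, c i * (θ i s ⬝ᵥ u (s + (j' : ℕ)))) :=
              Fin.sum_univ_eq_sum_range
                (fun s => θ n s ⬝ᵥ u (s + (j' : ℕ))
                  - ∑ i ∈ range n, c i * (θ i s ⬝ᵥ u (s + (j' : ℕ)))) (L + n)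
          _ = 0 := by
              rw [Finset.sum_sub_distrib, hC2 n le_rfl, Finset.sum_comm,
                show ∑ i ∈ range n, ∑ s ∈ range (L + n), c i * (θ i s ⬝ᵥ u (s + (j' : ℕ)))
                  = ∑ i ∈ range n, c i * -((η ᵥ* A ^ i) ⬝ᵥ x (j' : ℕ)) from
                Finset.sum_congr rfl fun i hi => by
                  rw [← Finset.mul_sum, hC2 i (Finset.mem_range.mp hi).le]]
              have := hCHdot (j' : ℕ)
              simp only [mul_neg, Finset.sum_neg_distrib]
              linarith
    have hrel : ∀ s < L + n, ∀ a, θ n s a = ∑ i ∈ range n, c i * θ i s a := by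
      intro s hs a
      have := congrFun hψ0 (⟨s, hs⟩, a)
      simp only [hψdef, Pi.zero_apply] at this
      linarith
    -- kill ζ by downward induction
    have hζk : ∀ k t, L ≤ t + k → ζ t = 0 := by
      intro k
      induction k with
      | zero => intro t ht; exact hζ0 t (by omega)
      | succ k ihk =>
        intro t ht
        by_cases hLt : L ≤ t
        · exact hζ0 t hLt
        · push_neg at hLt
          funext a
          have h1 := hrel (t + n) (by omega) a
          rw [show θ n (t + n) a = ζ t a by
            simp only [hθdef]; rw [if_neg (by omega), show t + n - n = t by omega]] at h1
          rw [Finset.sum_eq_zero (fun i hi => ?_)] at h1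
          · rw [h1]; rfl
          · rw [Finset.mem_range] at hi
            have : θ i (t + n) a = ζ (t + n - i) a := by
              simp only [hθdef]; rw [if_neg (by omega)]
            rw [this, ihk (t + n - i) (by omega)]
            simp
    have hζall : ∀ t, ζ t = 0 := fun t => hζk L t (by omega)
    -- kill η using controllability
    have hηB : ∀ e, e < n → η ᵥ* (A ^ e * B) = 0 := by
      intro e
      induction e using Nat.strong_induction_on with
      | _ e ihe =>
        intro he
        funext a
        have h1 := hrel (n - 1 - e) (by omega) a
        rw [show θ n (n - 1 - e) a = (η ᵥ* (A ^ e * B)) a by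
          simp only [hθdef]; rw [if_pos (by omega), show n - 1 - (n - 1 - e) = e by omega]] at h1
        rw [Finset.sum_eq_zero (fun i hi => ?_)] at h1
        · rw [h1]; rfl
        · rw [Finset.mem_range] at hi
          by_cases hti : n - 1 - e < i
          · have : θ i (n - 1 - e) a = (η ᵥ* (A ^ (i - 1 - (n - 1 - e)) * B)) a := by
              simp only [hθdef]; rw [if_pos hti]
            rw [this, ihe (i - 1 - (n - 1 - e)) (by omega) (by omega)]
            simp
          · have : θ i (n - 1 - e) a = ζ (n - 1 - e - i) a := by
              simp only [hθdef]; rw [if_neg hti]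
            rw [this, hζall]
            simp
    have hη0 : η = 0 := by
      refine vecMul_eq_zero_of_rank_rows (ctrbMat A B) (by simpa using hctrb) ?_
      funext ea
      have : (ctrbMat A B).vecMul η ea = (η ᵥ* (A ^ (ea.1 : ℕ) * B)) ea.2 := rfl
      rw [this, hηB (ea.1 : ℕ) ea.1.isLt]
      rfl
    funext r
    rcases r with r | ⟨i, a⟩
    · exact congrFun hη0 r
    · have := congrFun (hζall (i : ℕ)) a
      simp only [hζdef, dif_pos i.isLt, Fin.eta] at this
      exact this
  obtain ⟨α, hα⟩ := mulVec_surjective_of_rows_li S rowsli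
    (Sum.elim v fun is => w (is.1 : ℕ) is.2)
  refine ⟨α, ?_, ?_⟩
  · intro i hi
    funext s
    have h1 := congrFun hα (Sum.inr (⟨i, hi⟩, s))
    simp only [hS, Matrix.mulVec, dotProduct, Sum.elim_inr] at h1
    rw [combSignal, ← h1]
    exact Finset.sum_congr rfl fun j _ => mul_comm _ _
  · intro r
    have h1 := congrFun hα (Sum.inl r)
    simp only [hS, Matrix.mulVec, dotProduct, Sum.elim_inl] at h1
    rw [← h1]
    exact Finset.sum_congr rfl fun j _ => mul_comm _ _

lemma comb_mulVec {ι : Type*} [Fintype ι] {q r' : ℕ} (M : Matrix (Fin q) (Fin r') ℝ)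
    (α : ι → ℝ) (g : ι → Fin r' → ℝ) (s : Fin q) :
    ∑ j, α j * (M.mulVec (g j)) s = (M.mulVec (fun c => ∑ j, α j * g j c)) s := by
  simp only [Matrix.mulVec, dotProduct, Finset.mul_sum]
  rw [Finset.sum_comm]
  exact Finset.sum_congr rfl fun c _ => Finset.sum_congr rfl fun j _ => by ring

lemma dotsq_nonneg {q : ℕ} (v : Fin q → ℝ) : 0 ≤ v ⬝ᵥ v :=
  Finset.sum_nonneg fun i _ => mul_self_nonneg _

theorem statement8' {n m p N L ν : ℕ} (A : Matrix (Fin n) (Fin n) ℝ)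
    (B : Matrix (Fin n) (Fin m) ℝ) (C : Matrix (Fin p) (Fin n) ℝ) (D : Matrix (Fin p) (Fin m) ℝ)
    (u : ℕ → Fin m → ℝ) (y : ℕ → Fin p → ℝ)
    (x : ℕ → Fin n → ℝ)
    (hx : ∀ k < N, x (k + 1) = A.mulVec (x k) + B.mulVec (u k) ∧
      y k = C.mulVec (x k) + D.mulVec (u k))
    (hobs : (obsMat A C).rank = n) (hctrb : (ctrbMat A B).rank = n)
    (hpe : PersistentlyExciting m (L + n) N u)
    (hnν : n ≤ ν) (hν : ν < L) (hLN : L + n ≤ N)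
    (γsq : ℝ) :
    (∀ α : Fin (N - L + 1) → ℝ, ZeroDataPrefix N L ν α u y →
      ∑ i ∈ Finset.range L, combSignal N L α y i ⬝ᵥ combSignal N L α y i ≤
        γsq * ∑ i ∈ Finset.range L, combSignal N L α u i ⬝ᵥ combSignal N L α u i) ↔
    (∀ ub : ℕ → Fin m → ℝ, ∀ yb : ℕ → Fin p → ℝ,
      IsZeroInitTrajectory A B C D (L - ν) ub yb →
      ∀ h < L - ν,
        ∑ k ∈ Finset.range (h + 1), yb k ⬝ᵥ yb k ≤
          γsq * ∑ k ∈ Finset.range (h + 1), ub k ⬝ᵥ ub k) := by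
  have hL : 0 < L := by omega
  set xb : (Fin (N - L + 1) → ℝ) → ℕ → Fin n → ℝ :=
    fun α i r => ∑ j : Fin (N - L + 1), α j * x (i + (j : ℕ)) r with hxbdef
  have hNL : ∀ (i : ℕ) (j : Fin (N - L + 1)), i < L → i + (j : ℕ) < N := by
    intro i j hi
    have := j.isLt
    omega
  have hrec : ∀ α i, i < L →
      xb α (i + 1) = A.mulVec (xb α i) + B.mulVec (combSignal N L α u i) := by
    intro α i hi
    funext r
    calc xb α (i + 1) r
        = ∑ j : Fin (N - L + 1), α j * ((A.mulVec (x (i + (j : ℕ)))) r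
            + (B.mulVec (u (i + (j : ℕ)))) r) := by
          refine Finset.sum_congr rfl fun j _ => ?_
          rw [show (i + 1) + (j : ℕ) = (i + (j : ℕ)) + 1 by omega, (hx (i + (j : ℕ)) (hNL i j hi)).1]
          rfl
      _ = (∑ j : Fin (N - L + 1), α j * (A.mulVec (x (i + (j : ℕ)))) r)
            + ∑ j : Fin (N - L + 1), α j * (B.mulVec (u (i + (j : ℕ)))) r := by
          rw [← Finset.sum_add_distrib]
          exact Finset.sum_congr rfl fun j _ => by ring
      _ = (A.mulVec (xb α i)) r + (B.mulVec (combSignal N L α u i)) r := by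
          rw [comb_mulVec, comb_mulVec]
          rfl
      _ = (A.mulVec (xb α i) + B.mulVec (combSignal N L α u i)) r := rfl
  have hout : ∀ α i, i < L →
      combSignal N L α y i = C.mulVec (xb α i) + D.mulVec (combSignal N L α u i) := by
    intro α i hi
    funext s
    calc combSignal N L α y i s
        = ∑ j : Fin (N - L + 1), α j * ((C.mulVec (x (i + (j : ℕ)))) s
            + (D.mulVec (u (i + (j : ℕ)))) s) := by
          refine Finset.sum_congr rfl fun j _ => ?_
          rw [(hx (i + (j : ℕ)) (hNL i j hi)).2]
          rfl
      _ = (∑ j : Fin (N - L + 1), α j * (C.mulVec (x (i + (j : ℕ)))) s)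
            + ∑ j : Fin (N - L + 1), α j * (D.mulVec (u (i + (j : ℕ)))) s := by
          rw [← Finset.sum_add_distrib]
          exact Finset.sum_congr rfl fun j _ => by ring
      _ = (C.mulVec (xb α i)) s + (D.mulVec (combSignal N L α u i)) s := by
          rw [comb_mulVec, comb_mulVec]
          rfl
      _ = (C.mulVec (xb α i) + D.mulVec (combSignal N L α u i)) s := rfl
  constructor
  · -- data-based inequality implies the gain bound
    rintro ha ub yb ⟨xc, hxc0, hxc⟩ h hh
    set w : ℕ → Fin m → ℝ := fun i => if ν ≤ i ∧ i < ν + (h + 1) then ub (i - ν) else 0 with hwdef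
    obtain ⟨α, hαu, hαx⟩ := key_surj A B u x (fun k hk => (hx k hk).1) hctrb hpe hL hLN 0 w
    have hx0 : xb α 0 = 0 := by
      funext r
      have h1 := hαx r
      simp only [hxbdef, zero_add]
      simpa using h1
    have hw0 : ∀ i, i < ν → w i = 0 := by
      intro i hi
      funext s
      simp only [hwdef]
      rw [if_neg (by omega)]
    have hwtail : ∀ i, ν + (h + 1) ≤ i → w i = 0 := by
      intro i hi
      funext s
      simp only [hwdef]
      rw [if_neg (by omega)]
    have hwmid : ∀ k, k ≤ h → w (ν + k) = ub k := by
      intro k hk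
      funext s
      simp only [hwdef]
      rw [if_pos ⟨by omega, by omega⟩, show ν + k - ν = k by omega]
    have hpre : ∀ i, i ≤ ν → xb α i = 0 := by
      intro i
      induction i with
      | zero => intro _; exact hx0
      | succ i ih =>
        intro hiν
        rw [hrec α i (by omega), ih (by omega), hαu i (by omega), hw0 i (by omega),
          Matrix.mulVec_zero, Matrix.mulVec_zero, add_zero]
    have hzdp : ZeroDataPrefix N L ν α u y := by
      intro i hi
      have hu0 : combSignal N L α u i = 0 := by rw [hαu i (by omega), hw0 i hi]
      refine ⟨hu0, ?_⟩
      rw [hout α i (by omega), hu0, hpre i (by omega), Matrix.mulVec_zero, Matrix.mulVec_zero,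
        add_zero]
    have hstate : ∀ k, k ≤ h + 1 → xc k = xb α (ν + k) := by
      intro k
      induction k with
      | zero => intro _; rw [hxc0, add_zero, hpre ν le_rfl]
      | succ k ih =>
        intro hk
        rw [(hxc k (by omega)).1, ih (by omega), show ν + (k + 1) = (ν + k) + 1 by omega,
          hrec α (ν + k) (by omega), hαu (ν + k) (by omega), hwmid k (by omega)]
    have hymatch : ∀ k, k ≤ h → yb k = combSignal N L α y (ν + k) := by
      intro k hk
      rw [(hxc k (by omega)).2, hout α (ν + k) (by omega), ← hstate k (by omega),
        hαu (ν + k) (by omega), hwmid k (by omega)]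
    have key := ha α hzdp
    have hsub : Finset.Ico ν (ν + (h + 1)) ⊆ Finset.range L := by
      intro i hi
      rw [Finset.mem_Ico] at hi
      rw [Finset.mem_range]
      omega
    have hus : ∑ i ∈ Finset.range L, combSignal N L α u i ⬝ᵥ combSignal N L α u i
        = ∑ k ∈ Finset.range (h + 1), ub k ⬝ᵥ ub k := by
      rw [← Finset.sum_subset hsub (fun i hi hni => ?_)]
      · rw [Finset.sum_Ico_eq_sum_range, show ν + (h + 1) - ν = h + 1 by omega]
        refine Finset.sum_congr rfl fun k hk => ?_
        rw [Finset.mem_range] at hk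
        rw [hαu (ν + k) (by omega), hwmid k (by omega)]
      · rw [Finset.mem_range] at hi
        rw [Finset.mem_Ico] at hni
        push_neg at hni
        have : w i = 0 := by
          by_cases hc : ν ≤ i
          · exact hwtail i (by omega)
          · exact hw0 i (by omega)
        rw [hαu i hi, this, zero_dotProduct]
    have hys : ∑ k ∈ Finset.range (h + 1), yb k ⬝ᵥ yb k
        ≤ ∑ i ∈ Finset.range L, combSignal N L α y i ⬝ᵥ combSignal N L α y i := by
      have e1 : ∑ k ∈ Finset.range (h + 1), yb k ⬝ᵥ yb k
          = ∑ i ∈ Finset.Ico ν (ν + (h + 1)),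
              combSignal N L α y i ⬝ᵥ combSignal N L α y i := by
        rw [Finset.sum_Ico_eq_sum_range, show ν + (h + 1) - ν = h + 1 by omega]
        refine Finset.sum_congr rfl fun k hk => ?_
        rw [Finset.mem_range] at hk
        rw [hymatch k (by omega)]
      rw [e1]
      exact Finset.sum_le_sum_of_subset_of_nonneg hsub fun i _ _ => dotsq_nonneg _
    rw [hus] at key
    linarith
  · -- gain bound implies data-based inequality
    intro hb α hα
    have hup : ∀ i, i < ν → combSignal N L α u i = 0 := fun i hi => (hα i hi).1
    have hyp : ∀ i, i < ν → combSignal N L α y i = 0 := fun i hi => (hα i hi).2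
    have hCx : ∀ i, i < ν → C.mulVec (xb α i) = 0 := by
      intro i hi
      have h1 := hout α i (by omega)
      rw [hyp i hi, hup i hi, Matrix.mulVec_zero, add_zero] at h1
      exact h1.symm
    have hxA : ∀ i, i < ν → xb α (i + 1) = A.mulVec (xb α i) := by
      intro i hi
      rw [hrec α i (by omega), hup i hi, Matrix.mulVec_zero, add_zero]
    have hpow : ∀ i, i ≤ ν → xb α i = (A ^ i).mulVec (xb α 0) := by
      intro i
      induction i with
      | zero => intro _; rw [pow_zero, Matrix.one_mulVec]
      | succ i ih =>
        intro hi
        rw [hxA i (by omega), ih (by omega), Matrix.mulVec_mulVec, ← pow_succ']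
    have hobs0 : xb α 0 = 0 := by
      apply mulVec_eq_zero_of_rank_cols (obsMat A C) (by simpa using hobs)
      funext ip
      have e1 : (obsMat A C).mulVec (xb α 0) ip = ((C * A ^ (ip.1 : ℕ)).mulVec (xb α 0)) ip.2 :=
        rfl
      have hip : (ip.1 : ℕ) < ν := by
        have := ip.1.isLt
        omega
      rw [e1, ← Matrix.mulVec_mulVec, ← hpow (ip.1 : ℕ) (by omega), hCx (ip.1 : ℕ) hip]
      rfl
    have hxbν : ∀ i, i ≤ ν → xb α i = 0 := by
      intro i hi
      rw [hpow i hi, hobs0, Matrix.mulVec_zero]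
    have htrajb : IsZeroInitTrajectory A B C D (L - ν)
        (fun k => combSignal N L α u (ν + k)) (fun k => combSignal N L α y (ν + k)) := by
      refine ⟨fun k => xb α (ν + k), by simpa using hxbν ν le_rfl, fun k hk => ⟨?_, ?_⟩⟩
      · show xb α (ν + (k + 1)) = A.mulVec (xb α (ν + k)) + B.mulVec (combSignal N L α u (ν + k))
        rw [show ν + (k + 1) = (ν + k) + 1 by omega]
        exact hrec α (ν + k) (by omega)
      · show combSignal N L α y (ν + k)
            = C.mulVec (xb α (ν + k)) + D.mulVec (combSignal N L α u (ν + k))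
        exact hout α (ν + k) (by omega)
    have key := hb _ _ htrajb (L - ν - 1) (by omega)
    rw [show L - ν - 1 + 1 = L - ν by omega] at key
    have hys : ∑ i ∈ Finset.range L, combSignal N L α y i ⬝ᵥ combSignal N L α y i
        = ∑ k ∈ Finset.range (L - ν),
            combSignal N L α y (ν + k) ⬝ᵥ combSignal N L α y (ν + k) := by
      rw [Finset.range_eq_Ico, ← Finset.sum_Ico_consecutive _ (Nat.zero_le ν) (le_of_lt hν),
        Finset.sum_eq_zero (fun i hi => ?_), zero_add, Finset.sum_Ico_eq_sum_range]
      · rw [Finset.mem_Ico] at hi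
        rw [hyp i hi.2, zero_dotProduct]
    have hus : ∑ i ∈ Finset.range L, combSignal N L α u i ⬝ᵥ combSignal N L α u i
        = ∑ k ∈ Finset.range (L - ν),
            combSignal N L α u (ν + k) ⬝ᵥ combSignal N L α u (ν + k) := by
      rw [Finset.range_eq_Ico, ← Finset.sum_Ico_consecutive _ (Nat.zero_le ν) (le_of_lt hν),
        Finset.sum_eq_zero (fun i hi => ?_), zero_add, Finset.sum_Ico_eq_sum_range]
      · rw [Finset.mem_Ico] at hi
        rw [hup i hi.2, zero_dotProduct]
    rw [hys, hus]
    exact key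

/-- data-based verification of a finite-horizon ℓ₂-gain bound: the
data-based inequality (a) is equivalent to the ℓ₂-gain bound `γ` over the horizon `L-ν`. -/
theorem statement8 {n m p N L ν : ℕ} (A : Matrix (Fin n) (Fin n) ℝ)
    (B : Matrix (Fin n) (Fin m) ℝ) (C : Matrix (Fin p) (Fin n) ℝ) (D : Matrix (Fin p) (Fin m) ℝ)
    (u : ℕ → Fin m → ℝ) (y : ℕ → Fin p → ℝ)
    (htraj : IsTrajectory A B C D N u y)
    (hmin : IsMinimal A B C)
    (hpe : PersistentlyExciting m (L + n) N u)
    (hnν : n ≤ ν) (hν : ν < L) (hLN : L + n ≤ N)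
    (γsq : ℝ) :
    (∀ α : Fin (N - L + 1) → ℝ, ZeroDataPrefix N L ν α u y →
      ∑ i ∈ Finset.range L, combSignal N L α y i ⬝ᵥ combSignal N L α y i ≤
        γsq * ∑ i ∈ Finset.range L, combSignal N L α u i ⬝ᵥ combSignal N L α u i) ↔
    (∀ ub : ℕ → Fin m → ℝ, ∀ yb : ℕ → Fin p → ℝ,
      IsZeroInitTrajectory A B C D (L - ν) ub yb →
      ∀ h < L - ν,
        ∑ k ∈ Finset.range (h + 1), yb k ⬝ᵥ yb k ≤
          γsq * ∑ k ∈ Finset.range (h + 1), ub k ⬝ᵥ ub k) := by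
  obtain ⟨x, hx⟩ := htraj
  exact statement8' A B C D u y x hx hmin.1 hmin.2 hpe hnν hν hLN γsq
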